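/- arXiv:math/0701051 — 3 statements merged into one kernel-verified Lean document; each statement's English description precedes it below -/
import Mathlib

section
/- For any Young diagram λ and any permutation π ∈ S_l, Σ_{σ₁,σ₂ ∈ S_l, σ₁σ₂ = π} (−1)^{|σ₁|} Ñ^λ(σ₁,σ₂) = Σ_{σ₁,σ₂ ∈ S_l, σ₁σ₂ = π} (−1)^{|σ₁|} N̂^λ(σ₁,σ₂); that is, in the signed sum over all factorizations of π the count of injective functions may be replaced by the count of all functions. -/
open scoped Classical
open MeasureTheory ProbabilityTheory

noncomputable section

namespace Paper

/-- `|σ|`: the minimal number of factors needed to write `σ` as a product of transpositions. -/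
def permLength {α : Type*} [DecidableEq α] [Fintype α] (σ : Equiv.Perm α) : ℕ :=
  sInf {k | ∃ L : List (Equiv.Perm α), L.length = k ∧ (∀ τ ∈ L, τ.IsSwap) ∧ L.prod = σ}

/-- `r(λ)`: the number of rows of a Young diagram. -/
def rows (μ : YoungDiagram) : ℕ := μ.colLen 0

/-- `c(λ)`: the number of columns of a Young diagram. -/
def cols (μ : YoungDiagram) : ℕ := μ.rowLen 0

/-- The set of minimal representatives of the cycles (orbits, fixed points included) of `σ`. -/
def cycleReps {l : ℕ} (σ : Equiv.Perm (Fin l)) : Finset (Fin l) :=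
  Finset.univ.filter fun m => ∀ x, σ.SameCycle m x → m ≤ x

/-- `|C(σ)|`: the number of cycles (orbits, fixed points included) of `σ`. -/
def cyclesCount {l : ℕ} (σ : Equiv.Perm (Fin l)) : ℕ := (cycleReps σ).card

/-- The multiset of the lengths of all the cycles of `σ` (fixed points included). -/
def fullCycleType {l : ℕ} (σ : Equiv.Perm (Fin l)) : Multiset ℕ :=
  (cycleReps σ).val.map fun m => (Finset.univ.filter fun a => σ.SameCycle m a).card

/-- `N^λ(σ₁,σ₂)`: the number of colorings of the cycles of `σ₁` (by columns of `λ`, numbered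
from 1) and of the cycles of `σ₂` (by rows of `λ`, numbered from 1), compatible with `λ`;
a coloring is encoded as a pair of functions on points, constant on the respective cycles.
Recall that in Mathlib a cell of a Young diagram is a pair (row index, column index),
both 0-based, so the paper's requirement `(h(c₁), h(c₂)) ∈ λ` (column first, 1-based) reads
`(h₂ m - 1, h₁ m - 1) ∈ μ`. -/
def Ncol {l : ℕ} (μ : YoungDiagram) (σ₁ σ₂ : Equiv.Perm (Fin l)) : ℕ :=
  Nat.card {h : (Fin l → ℕ) × (Fin l → ℕ) //
    (∀ m, h.1 (σ₁ m) = h.1 m) ∧ (∀ m, h.2 (σ₂ m) = h.2 m) ∧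
    ∀ m, 1 ≤ h.1 m ∧ 1 ≤ h.2 m ∧ ((h.2 m - 1, h.1 m - 1) : ℕ × ℕ) ∈ μ}

/-- `P_λ`: the permutations preserving each row of `λ` (with respect to the labelling `f`). -/
def youngP {n : ℕ} (μ : YoungDiagram) (f : Fin n ≃ μ.cells) : Finset (Equiv.Perm (Fin n)) :=
  Finset.univ.filter fun σ => ∀ i, ((f (σ i)) : ℕ × ℕ).1 = ((f i) : ℕ × ℕ).1

/-- `Q_λ`: the permutations preserving each column of `λ` (with respect to the labelling `f`). -/
def youngQ {n : ℕ} (μ : YoungDiagram) (f : Fin n ≃ μ.cells) : Finset (Equiv.Perm (Fin n)) :=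
  Finset.univ.filter fun σ => ∀ i, ((f (σ i)) : ℕ × ℕ).2 = ((f i) : ℕ × ℕ).2

/-- `a_λ = Σ_{σ ∈ P_λ} σ` in the group algebra. -/
def aElt {n : ℕ} (μ : YoungDiagram) (f : Fin n ≃ μ.cells) :
    MonoidAlgebra ℂ (Equiv.Perm (Fin n)) :=
  ∑ σ ∈ youngP μ f, MonoidAlgebra.single σ 1

/-- `b_λ = Σ_{σ ∈ Q_λ} sgn(σ) σ` in the group algebra. -/
def bElt {n : ℕ} (μ : YoungDiagram) (f : Fin n ≃ μ.cells) :
    MonoidAlgebra ℂ (Equiv.Perm (Fin n)) :=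
  ∑ σ ∈ youngQ μ f, MonoidAlgebra.single σ ((Equiv.Perm.sign σ : ℤ) : ℂ)

/-- `V_λ = ℂ[S_n] b_λ a_λ`, the left ideal generated by the Young symmetrizer. -/
def youngModule {n : ℕ} (μ : YoungDiagram) (f : Fin n ≃ μ.cells) :
    Submodule ℂ (MonoidAlgebra ℂ (Equiv.Perm (Fin n))) :=
  LinearMap.range (LinearMap.mulRight ℂ (bElt μ f * aElt μ f))

/-- `ρ^λ(π)`: left multiplication by `π` on `V_λ`. -/
def rho {n : ℕ} (μ : YoungDiagram) (f : Fin n ≃ μ.cells) (π : Equiv.Perm (Fin n)) :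
    youngModule μ f →ₗ[ℂ] youngModule μ f :=
  (LinearMap.mulLeft ℂ (MonoidAlgebra.single π (1 : ℂ))).restrict (fun x hx => by
    obtain ⟨y, rfl⟩ := LinearMap.mem_range.mp hx
    exact LinearMap.mem_range.mpr ⟨MonoidAlgebra.single π (1 : ℂ) * y, by
      simp [LinearMap.mulRight_apply, LinearMap.mulLeft_apply, mul_assoc]⟩)

/-- The normalized character `χ^λ(π) = Tr ρ^λ(π) / Tr ρ^λ(e)`. -/
def chi {n : ℕ} (μ : YoungDiagram) (f : Fin n ≃ μ.cells) (π : Equiv.Perm (Fin n)) : ℂ :=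
  LinearMap.trace ℂ (youngModule μ f) (rho μ f π) /
    LinearMap.trace ℂ (youngModule μ f) (rho μ f 1)

/-- The embedding of `S_l` into `S_n` (permutations fixing `l+1,…,n`). -/
def embed {l n : ℕ} (hl : l ≤ n) (π : Equiv.Perm (Fin l)) : Equiv.Perm (Fin n) :=
  π.viaFintypeEmbedding (Fin.castLEEmb hl)

/-- The normalized character `Σ^λ(π) = (n)_l χ^λ(π)` for `π ∈ S_l`, `l ≤ n`. -/
def normChar {n l : ℕ} (μ : YoungDiagram) (f : Fin n ≃ μ.cells) (hl : l ≤ n)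
    (π : Equiv.Perm (Fin l)) : ℂ :=
  (n.descFactorial l : ℂ) * chi μ f (embed hl π)

/-- `ψ(c) = max_{a ∈ c} φ(a)`: the maximum of `φ` over the cycle of `τ` containing `m`. -/
def cycleMax {l r : ℕ} (τ : Equiv.Perm (Fin l)) (φ : Fin l → Fin r) (m : Fin l) : Fin r :=
  ((Finset.univ.filter fun a => τ.SameCycle m a).image φ).max'
    ⟨φ m, Finset.mem_image_of_mem φ
      (Finset.mem_filter.mpr ⟨Finset.mem_univ m, Equiv.Perm.SameCycle.refl τ m⟩)⟩

/-- The number of orbits of the subgroup `⟨σ₁, σ₂⟩` acting on `{1,…,l}`. -/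
def jointOrbits {l : ℕ} (σ₁ σ₂ : Equiv.Perm (Fin l)) : ℕ :=
  Nat.card (MulAction.orbitRel.Quotient (Subgroup.closure {σ₁, σ₂}) (Fin l))

/-- `o(σ₁,σ₂) = l − |C(σ₁)| − |C(σ₂)| + orbits(σ₁,σ₂)` (as an integer). -/
def oStat {l : ℕ} (σ₁ σ₂ : Equiv.Perm (Fin l)) : ℤ :=
  (l : ℤ) - cyclesCount σ₁ - cyclesCount σ₂ + jointOrbits σ₁ σ₂

/-- The free cumulant `R_{k+1}^λ` of (the transition measure of) `λ`, given by the
combinatorial formula: the sum of `(−1)^{|σ₁|} N^λ(σ₁,σ₂)` over the minimal factorizations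
`σ₁σ₂ = (1,2,…,k)` in `S_k`, i.e. those with `|σ₁| + |σ₂| = k − 1`. -/
def freeCumulant (μ : YoungDiagram) (k : ℕ) : ℂ :=
  ∑ p ∈ Finset.univ.filter (fun p : Equiv.Perm (Fin k) × Equiv.Perm (Fin k) =>
      p.1 * p.2 = finRotate k ∧ permLength p.1 + permLength p.2 = k - 1),
    (-1 : ℂ) ^ permLength p.1 * (Ncol μ p.1 p.2 : ℂ)

/-- `Ñ^λ(σ₁,σ₂)`: the number of injective functions from `{1,…,l}` to the boxes of `λ`
such that the row coordinate is constant on each cycle of `σ₂` and the column coordinate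
is constant on each cycle of `σ₁`.  (In Mathlib a cell is (row, column).) -/
def Ntilde {l : ℕ} (μ : YoungDiagram) (σ₁ σ₂ : Equiv.Perm (Fin l)) : ℕ :=
  Nat.card {f : Fin l → μ.cells // Function.Injective f ∧
    (∀ m, ((f (σ₂ m)) : ℕ × ℕ).1 = ((f m) : ℕ × ℕ).1) ∧
    (∀ m, ((f (σ₁ m)) : ℕ × ℕ).2 = ((f m) : ℕ × ℕ).2)}

/-- `N̂^λ(σ₁,σ₂)`: the number of all functions from `{1,…,l}` to the boxes of `λ`
such that the row coordinate is constant on each cycle of `σ₂` and the column coordinate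
is constant on each cycle of `σ₁`. -/
def Nhat {l : ℕ} (μ : YoungDiagram) (σ₁ σ₂ : Equiv.Perm (Fin l)) : ℕ :=
  Nat.card {f : Fin l → μ.cells //
    (∀ m, ((f (σ₂ m)) : ℕ × ℕ).1 = ((f m) : ℕ × ℕ).1) ∧
    (∀ m, ((f (σ₁ m)) : ℕ × ℕ).2 = ((f m) : ℕ × ℕ).2)}

/-- The number of column inversions of a permutation `σ` of the boxes of `λ`: the number of
pairs of boxes `□₁, □₂` such that `σ(□₁), σ(□₂)` are in the same column, `r(□₁) < r(□₂)` and
`r(σ(□₁)) > r(σ(□₂))`. -/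
def invCount (μ : YoungDiagram) (σ : Equiv.Perm μ.cells) : ℕ :=
  (Finset.univ.filter fun bb : (↥μ.cells × ↥μ.cells) =>
    ((σ bb.1 : ℕ × ℕ).2 = (σ bb.2 : ℕ × ℕ).2 ∧ (bb.1 : ℕ × ℕ).1 < (bb.2 : ℕ × ℕ).1 ∧
      (σ bb.2 : ℕ × ℕ).1 < (σ bb.1 : ℕ × ℕ).1)).card

/-- `(−1)^{inv(σ)}`, set to `0` when two boxes of the same row are mapped by `σ` to boxes
of the same column. -/
def invSign (μ : YoungDiagram) (σ : Equiv.Perm μ.cells) : ℂ :=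
  if ∃ b₁ b₂ : μ.cells, b₁ ≠ b₂ ∧ (b₁ : ℕ × ℕ).1 = (b₂ : ℕ × ℕ).1 ∧
      (σ b₁ : ℕ × ℕ).2 = (σ b₂ : ℕ × ℕ).2
  then 0 else (-1 : ℂ) ^ invCount μ σ

/-- The standard complex centered Gaussian distribution, realized as the distribution of
`(x + i y)/√2` with `x, y` independent standard real Gaussians. -/
def stdComplexGaussian : Measure ℂ :=
  ((gaussianReal 0 1).prod (gaussianReal 0 1)).map
    fun p => ((p.1 : ℂ) + (p.2 : ℂ) * Complex.I) / (Real.sqrt 2 : ℂ)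

/-- The random matrix `T_λ` built from the family of entries `t`. -/
def matOf {N : ℕ} {Ω : Type*} (t : Fin N → Fin N → Ω → ℂ) (ω : Ω) :
    Matrix (Fin N) (Fin N) ℂ :=
  Matrix.of fun i j => t i j ω

/-- The hypotheses on the entries of the random matrix `T_λ`: independent entries, standard
complex Gaussian on the boxes of `λ` and zero outside.  The matrix entry `t i j` (0-based)
corresponds to the box in column `i+1` and row `j+1` of `λ` (the paper's `(i,j) ∈ λ` with the
French convention), i.e. to the Mathlib cell `(j, i)`. -/
structure IsGaussianOn {N : ℕ} {Ω : Type*} [MeasureSpace Ω]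
    (t : Fin N → Fin N → Ω → ℂ) (μ : YoungDiagram) : Prop where
  prob : IsProbabilityMeasure (volume : Measure Ω)
  meas : ∀ i j, Measurable (t i j)
  indep : iIndepFun (fun ij : Fin N × Fin N => t ij.1 ij.2) volume
  gauss : ∀ i j : Fin N, (((j : ℕ), (i : ℕ)) : ℕ × ℕ) ∈ μ →
    Measure.map (t i j) volume = stdComplexGaussian
  zero : ∀ i j : Fin N, (((j : ℕ), (i : ℕ)) : ℕ × ℕ) ∉ μ → t i j = 0

/-! ### Bipartite graphs -/

/-- The simple graph on `C₁ ⊕ C₂` associated to a bipartite edge set `E ⊆ C₁ × C₂`. -/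
def bipGraph {C₁ C₂ : Type*} (E : Finset (C₁ × C₂)) : SimpleGraph (C₁ ⊕ C₂) where
  Adj x y := (∃ a b, (a, b) ∈ E ∧ x = Sum.inl a ∧ y = Sum.inr b) ∨
             (∃ a b, (a, b) ∈ E ∧ x = Sum.inr b ∧ y = Sum.inl a)
  symm := by
    constructor
    rintro x y (⟨a, b, h, rfl, rfl⟩ | ⟨a, b, h, rfl, rfl⟩)
    · exact Or.inr ⟨a, b, h, rfl, rfl⟩
    · exact Or.inl ⟨a, b, h, rfl, rfl⟩
  loopless := by
    constructor
    rintro x (⟨a, b, h, rfl, h2⟩ | ⟨a, b, h, rfl, h2⟩)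
    · cases h2
    · cases h2

/-- The degree of a left vertex in the bipartite edge set `E`. -/
def degL {C₁ C₂ : Type*} (E : Finset (C₁ × C₂)) (a : C₁) : ℕ :=
  (E.filter fun e => e.1 = a).card

/-- The degree of a right vertex in the bipartite edge set `E`. -/
def degR {C₁ C₂ : Type*} (E : Finset (C₁ × C₂)) (b : C₂) : ℕ :=
  (E.filter fun e => e.2 = b).card

/-- `E'` is a disjoint union of complete bipartite graphs of the form `G_{1,1}`, `G_{k,1}`,
`G_{1,k}` covering all the vertices: every vertex has nonzero degree and every edge has an
endpoint of degree one (i.e. every connected component is a star). -/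
def IsStarDecomposition {C₁ C₂ : Type*} (E' : Finset (C₁ × C₂)) : Prop :=
  (∀ a, 0 < degL E' a) ∧ (∀ b, 0 < degR E' b) ∧
    ∀ e ∈ E', degL E' e.1 = 1 ∨ degR E' e.2 = 1

/-- `N^λ(G)`: the number of colorings of the vertices of the bipartite graph with edge set `E`
(left vertices colored by columns of `λ`, right vertices by rows of `λ`, numbered from 1)
compatible with `λ`. -/
def NcolG {C₁ C₂ : Type*} (μ : YoungDiagram) (E : Finset (C₁ × C₂)) : ℕ :=
  Nat.card {h : (C₁ → ℕ) × (C₂ → ℕ) //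
    ∀ e ∈ E, 1 ≤ h.1 e.1 ∧ 1 ≤ h.2 e.2 ∧ ((h.2 e.2 - 1, h.1 e.1 - 1) : ℕ × ℕ) ∈ μ}

lemma sign_eq_neg_one_pow_permLength {α : Type*} [DecidableEq α] [Fintype α]
    (σ : Equiv.Perm α) : ((Equiv.Perm.sign σ : ℤ) : ℂ) = (-1 : ℂ) ^ permLength σ := by
  have hne : {k | ∃ L : List (Equiv.Perm α), L.length = k ∧ (∀ τ ∈ L, τ.IsSwap) ∧
      L.prod = σ}.Nonempty := by
    obtain ⟨L, hLp, hLs⟩ := (Equiv.Perm.truncSwapFactors σ).out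
    exact ⟨L.length, L, rfl, hLs, hLp⟩
  obtain ⟨L, hlen, hswap, hprod⟩ := Nat.sInf_mem hne
  have h1 : Equiv.Perm.sign σ = (-1 : ℤˣ) ^ L.length := by
    rw [← hprod]; exact Equiv.Perm.sign_prod_list_swap hswap
  have h2 : permLength σ = L.length := hlen.symm
  rw [h1, h2]; push_cast [Units.val_pow_eq_pow_val]; norm_num

theorem sum_Ntilde_eq_sum_Nhat (l : ℕ) (μ : YoungDiagram) (π : Equiv.Perm (Fin l)) :
    ∑ s ∈ Finset.univ.filter
        (fun s : Equiv.Perm (Fin l) × Equiv.Perm (Fin l) => s.1 * s.2 = π),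
      (-1 : ℂ) ^ permLength s.1 * (Ntilde μ s.1 s.2 : ℂ) =
    ∑ s ∈ Finset.univ.filter
        (fun s : Equiv.Perm (Fin l) × Equiv.Perm (Fin l) => s.1 * s.2 = π),
      (-1 : ℂ) ^ permLength s.1 * (Nhat μ s.1 s.2 : ℂ) := by
  classical
  set S := Finset.univ.filter
      (fun s : Equiv.Perm (Fin l) × Equiv.Perm (Fin l) => s.1 * s.2 = π) with hS
  -- compatibility predicate
  set C : (Equiv.Perm (Fin l) × Equiv.Perm (Fin l)) → (Fin l → μ.cells) → Prop :=
    fun s f => (∀ m, ((f (s.2 m)) : ℕ × ℕ).1 = ((f m) : ℕ × ℕ).1) ∧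
      (∀ m, ((f (s.1 m)) : ℕ × ℕ).2 = ((f m) : ℕ × ℕ).2) with hC
  have hNt : ∀ s : Equiv.Perm (Fin l) × Equiv.Perm (Fin l),
      (Ntilde μ s.1 s.2 : ℂ) =
        ∑ f : Fin l → μ.cells, if Function.Injective f ∧ C s f then (1 : ℂ) else 0 := by
    intro s
    rw [Finset.sum_boole]
    norm_cast
    rw [Ntilde, Nat.card_eq_fintype_card, Fintype.card_subtype]
  have hNh : ∀ s : Equiv.Perm (Fin l) × Equiv.Perm (Fin l),
      (Nhat μ s.1 s.2 : ℂ) =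
        ∑ f : Fin l → μ.cells, if C s f then (1 : ℂ) else 0 := by
    intro s
    rw [Finset.sum_boole]
    norm_cast
    rw [Nhat, Nat.card_eq_fintype_card, Fintype.card_subtype]
  -- rewrite with signs
  have hsgn : ∀ s : Equiv.Perm (Fin l) × Equiv.Perm (Fin l),
      (-1 : ℂ) ^ permLength s.1 = ((Equiv.Perm.sign s.1 : ℤ) : ℂ) :=
    fun s => (sign_eq_neg_one_pow_permLength s.1).symm
  calc ∑ s ∈ S, (-1 : ℂ) ^ permLength s.1 * (Ntilde μ s.1 s.2 : ℂ)
      = ∑ f : Fin l → μ.cells, ∑ s ∈ S,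
          (if Function.Injective f ∧ C s f then ((Equiv.Perm.sign s.1 : ℤ) : ℂ) else 0) := by
        rw [Finset.sum_comm]
        refine Finset.sum_congr rfl fun s _ => ?_
        rw [hsgn, hNt, Finset.mul_sum]
        exact Finset.sum_congr rfl fun f _ => by rw [mul_ite, mul_one, mul_zero]
    _ = ∑ f : Fin l → μ.cells, ∑ s ∈ S,
          (if C s f then ((Equiv.Perm.sign s.1 : ℤ) : ℂ) else 0) := by
        refine Finset.sum_congr rfl fun f _ => ?_
        by_cases hf : Function.Injective f
        · exact Finset.sum_congr rfl fun s _ => by simp [hf]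
        · -- both sides vanish
          have h1 : ∑ s ∈ S, (if Function.Injective f ∧ C s f
              then ((Equiv.Perm.sign s.1 : ℤ) : ℂ) else 0) = 0 := by
            refine Finset.sum_eq_zero fun s _ => by simp [hf]
          rw [h1]
          -- sign-reversing involution
          obtain ⟨i, j, hfij, hij⟩ := Function.not_injective_iff.mp hf
          set τ := Equiv.swap i j with hτ
          have hfτ : ∀ m, f (τ m) = f m := by
            intro m
            rcases eq_or_ne m i with rfl | hmi
            · rw [hτ, Equiv.swap_apply_left, hfij]
            rcases eq_or_ne m j with rfl | hmj
            · rw [hτ, Equiv.swap_apply_right, hfij]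
            · rw [hτ, Equiv.swap_apply_of_ne_of_ne hmi hmj]
          set g : (Equiv.Perm (Fin l) × Equiv.Perm (Fin l)) →
              (Equiv.Perm (Fin l) × Equiv.Perm (Fin l)) :=
            fun s => (s.1 * τ, τ * s.2) with hg
          have hCg : ∀ s, C s f → C (g s) f := by
            rintro s ⟨h2, h1⟩
            constructor
            · intro m
              show ((f ((τ * s.2) m)) : ℕ × ℕ).1 = _
              rw [Equiv.Perm.mul_apply, hfτ, h2]
            · intro m
              show ((f ((s.1 * τ) m)) : ℕ × ℕ).2 = _
              rw [Equiv.Perm.mul_apply, h1 (τ m), hfτ m]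
          have hgg : ∀ s, g (g s) = s := by
            intro s
            have he : g (g s) = (s.1 * τ * τ, τ * (τ * s.2)) := rfl
            rw [he, mul_assoc, Equiv.swap_mul_self, mul_one, ← mul_assoc,
              Equiv.swap_mul_self, one_mul]
          symm
          refine Finset.sum_involution (fun s _ => g s) ?_ ?_ ?_ (fun s hs => hgg s)
          · intro s _
            by_cases hCs : C s f
            · rw [if_pos hCs, if_pos (hCg s hCs)]
              have : Equiv.Perm.sign (s.1 * τ) = - Equiv.Perm.sign s.1 := by
                rw [map_mul, hτ, Equiv.Perm.sign_swap hij, mul_neg_one]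
              show ((Equiv.Perm.sign s.1 : ℤ) : ℂ) + ((Equiv.Perm.sign (s.1 * τ) : ℤ) : ℂ) = 0
              rw [this]; push_cast; ring
            · have hCgs : ¬ C (g s) f := fun h => hCs (by simpa [hgg] using hCg _ h)
              rw [if_neg hCs, if_neg hCgs, add_zero]
          · intro s _ _
            intro h
            apply hij
            have hτ1 : τ = 1 := by
              have := congrArg Prod.fst h
              simpa using mul_left_cancel (a := s.1) (by rw [mul_one]; exact this : s.1 * τ = s.1 * 1)
            have := congrArg (fun e : Equiv.Perm (Fin l) => e i) hτ1
            have hji : j = i := by simpa [hτ, Equiv.swap_apply_left] using this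
            exact hji.symm
          · intro s hs
            simp only [hS, Finset.mem_filter, Finset.mem_univ, true_and] at hs ⊢
            show s.1 * τ * (τ * s.2) = π
            rw [mul_assoc, ← mul_assoc τ, Equiv.swap_mul_self, one_mul, hs]
    _ = ∑ s ∈ S, (-1 : ℂ) ^ permLength s.1 * (Nhat μ s.1 s.2 : ℂ) := by
        rw [Finset.sum_comm]
        refine Finset.sum_congr rfl fun s _ => ?_
        rw [hsgn, hNh, Finset.mul_sum]
        exact Finset.sum_congr rfl fun f _ => by rw [mul_ite, mul_one, mul_zero]


end Paper
end
end

section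
/- Let G be a finite bipartite graph with vertex classes C₁, C₂ in which every vertex has nonzero degree. Then one can remove some edges of G so that the resulting spanning subgraph G̃ is a disjoint union of graphs of the form G_{1,1}, G_{k,1}, G_{1,k}; moreover, for every such spanning subgraph G̃ and every Young diagram λ with n boxes and every A ≥ r(λ), c(λ), one has N^λ(G) ≤ A^{(number of vertices of G)} · (n/A²)^{(number of connected components of G̃)}. -/
open scoped Classical
open MeasureTheory ProbabilityTheory

noncomputable section

namespace Paper

/-- helper: a left vertex of positive degree has an incident edge. -/
lemma exists_edge_left {C₁ C₂ : Type*} {E : Finset (C₁ × C₂)} {a : C₁} (h : 0 < degL E a) :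
    ∃ e ∈ E, e.1 = a := by
  simp only [degL] at h
  obtain ⟨e, he⟩ := Finset.card_pos.mp h
  exact ⟨e, (Finset.mem_filter.mp he).1, (Finset.mem_filter.mp he).2⟩

lemma exists_edge_right {C₁ C₂ : Type*} {E : Finset (C₁ × C₂)} {b : C₂} (h : 0 < degR E b) :
    ∃ e ∈ E, e.2 = b := by
  simp only [degR] at h
  obtain ⟨e, he⟩ := Finset.card_pos.mp h
  exact ⟨e, (Finset.mem_filter.mp he).1, (Finset.mem_filter.mp he).2⟩

lemma exists_star {C₁ C₂ : Type*} (E : Finset (C₁ × C₂)) :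
    (∀ a : C₁, 0 < degL E a) → (∀ b : C₂, 0 < degR E b) →
      ∃ E' ⊆ E, IsStarDecomposition E' := by
  induction E using Finset.strongInduction with
  | _ E ih =>
    intro h1 h2
    by_cases hs : ∀ e ∈ E, degL E e.1 = 1 ∨ degR E e.2 = 1
    · exact ⟨E, Finset.Subset.refl _, h1, h2, hs⟩
    · push_neg at hs
      obtain ⟨e, he, hL, hR⟩ := hs
      have heL : e ∈ E.filter fun x => x.1 = e.1 := Finset.mem_filter.mpr ⟨he, rfl⟩
      have heR : e ∈ E.filter fun x => x.2 = e.2 := Finset.mem_filter.mpr ⟨he, rfl⟩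
      have hd1 : ∀ a, 0 < degL (E.erase e) a := by
        intro a
        have hfe : degL (E.erase e) a = ((E.filter fun x => x.1 = a).erase e).card := by
          simp only [degL, Finset.filter_erase]
        by_cases ha : a = e.1
        · subst ha
          rw [hfe, Finset.card_erase_of_mem heL]
          have h1' := h1 e.1
          simp only [degL] at h1' hL
          omega
        · rw [hfe, Finset.erase_eq_of_notMem]
          · exact h1 a
          · intro hmem
            exact ha ((Finset.mem_filter.mp hmem).2).symm
      have hd2 : ∀ b, 0 < degR (E.erase e) b := by
        intro b
        have hfe : degR (E.erase e) b = ((E.filter fun x => x.2 = b).erase e).card := by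
          simp only [degR, Finset.filter_erase]
        by_cases hb : b = e.2
        · subst hb
          rw [hfe, Finset.card_erase_of_mem heR]
          have h2' := h2 e.2
          simp only [degR] at h2' hR
          omega
        · rw [hfe, Finset.erase_eq_of_notMem]
          · exact h2 b
          · intro hmem
            exact hb ((Finset.mem_filter.mp hmem).2).symm
      obtain ⟨E', hsub, hstar⟩ := ih (E.erase e) (Finset.erase_ssubset he) hd1 hd2
      exact ⟨E', hsub.trans (Finset.erase_subset _ _), hstar⟩

lemma mem_bound {μ : YoungDiagram} {i j : ℕ} (h : (i, j) ∈ μ) :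
    i < rows μ ∧ j < cols μ :=
  ⟨lt_of_lt_of_le (YoungDiagram.mem_iff_lt_colLen.mp h) (μ.colLen_anti 0 j (Nat.zero_le j)),
   lt_of_lt_of_le (YoungDiagram.mem_iff_lt_rowLen.mp h) (μ.rowLen_anti 0 i (Nat.zero_le i))⟩

lemma core_count {C₁ C₂ : Type} [Fintype C₁] [Fintype C₂]
    (E E' : Finset (C₁ × C₂)) (hsub : E' ⊆ E)
    (h1 : ∀ a, 0 < degL E' a) (h2 : ∀ b, 0 < degR E' b) (μ : YoungDiagram) :
    ∃ t : ℕ, t + 2 * Nat.card (bipGraph E').ConnectedComponent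
        ≤ Fintype.card C₁ + Fintype.card C₂ ∧
      NcolG μ E ≤ μ.card ^ Nat.card (bipGraph E').ConnectedComponent *
        (max (rows μ) (cols μ)) ^ t := by
  set M := max (rows μ) (cols μ) with hMdef
  set G := bipGraph E' with hG
  haveI : Finite G.ConnectedComponent := Quot.finite _
  have hadjE : ∀ e : C₁ × C₂, e ∈ E' → G.Adj (Sum.inl e.1) (Sum.inr e.2) := by
    intro e he
    rw [hG]
    exact Or.inl ⟨e.1, e.2, by simpa using he, rfl, rfl⟩
  have hpick : ∀ K : G.ConnectedComponent, ∃ e : C₁ × C₂, e ∈ E' ∧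
      G.connectedComponentMk (Sum.inl e.1) = K := by
    intro K
    obtain ⟨v, hv⟩ := K.exists_rep
    cases v with
    | inl a =>
      obtain ⟨e, he, ha⟩ := exists_edge_left (h1 a)
      exact ⟨e, he, by rw [ha]; exact hv⟩
    | inr b =>
      obtain ⟨e, he, hb⟩ := exists_edge_right (h2 b)
      refine ⟨e, he, ?_⟩
      rw [SimpleGraph.ConnectedComponent.sound (hadjE e he).reachable, hb]
      exact hv
  choose pick hpickE hpickK using hpick
  have hpickK2 : ∀ K, G.connectedComponentMk (Sum.inr (pick K).2) = K := fun K => by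
    rw [← SimpleGraph.ConnectedComponent.sound (hadjE (pick K) (hpickE K)).reachable]
    exact hpickK K
  set j : G.ConnectedComponent ⊕ G.ConnectedComponent → C₁ ⊕ C₂ :=
    Sum.elim (fun K => Sum.inl (pick K).1) (fun K => Sum.inr (pick K).2) with hj
  have hjinj : Function.Injective j := by
    rintro (K | K) (K' | K') h <;> rw [hj] at h <;>
      simp only [Sum.elim_inl, Sum.elim_inr, Sum.inl.injEq, Sum.inr.injEq] at h
    · have : K = K' := by rw [← hpickK K, ← hpickK K', h]
      rw [this]
    · exact absurd h Sum.inl_ne_inr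
    · exact absurd h Sum.inr_ne_inl
    · have : K = K' := by rw [← hpickK2 K, ← hpickK2 K', h]
      rw [this]
  set T := {v : C₁ ⊕ C₂ // v ∉ Set.range j} with hT
  refine ⟨Nat.card T, ?_, ?_⟩
  · have hinj : Function.Injective (Sum.elim (Subtype.val : T → C₁ ⊕ C₂) j) := by
      rintro (x | x) (y | y) h <;> simp only [Sum.elim_inl, Sum.elim_inr] at h
      · exact congrArg Sum.inl (Subtype.ext h)
      · exact absurd ⟨y, h.symm⟩ x.2
      · exact absurd ⟨x, h⟩ y.2
      · exact congrArg Sum.inr (hjinj h)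
    have hle := Nat.card_le_card_of_injective _ hinj
    rw [Nat.card_sum, Nat.card_sum, Nat.card_eq_fintype_card (α := C₁ ⊕ C₂),
      Fintype.card_sum] at hle
    rw [hT]
    rw [Nat.card_eq_fintype_card] at hle ⊢
    omega
  · have key : ∀ (h : (C₁ → ℕ) × (C₂ → ℕ)),
        (∀ e ∈ E, 1 ≤ h.1 e.1 ∧ 1 ≤ h.2 e.2 ∧ ((h.2 e.2 - 1, h.1 e.1 - 1) : ℕ × ℕ) ∈ μ) →
        (∀ a, 1 ≤ h.1 a ∧ h.1 a - 1 < M) ∧ (∀ b, 1 ≤ h.2 b ∧ h.2 b - 1 < M) := by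
      intro h hp
      constructor
      · intro a
        obtain ⟨e, he, ha⟩ := exists_edge_left (h1 a)
        obtain ⟨hx, hy, hbox⟩ := hp e (hsub he)
        subst ha
        exact ⟨hx, lt_of_lt_of_le (mem_bound hbox).2 (le_max_right _ _)⟩
      · intro b
        obtain ⟨e, he, hb⟩ := exists_edge_right (h2 b)
        obtain ⟨hx, hy, hbox⟩ := hp e (hsub he)
        subst hb
        exact ⟨hy, lt_of_lt_of_le (mem_bound hbox).1 (le_max_left _ _)⟩
    have hcol : ∀ (h : {h : (C₁ → ℕ) × (C₂ → ℕ) //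
        ∀ e ∈ E, 1 ≤ h.1 e.1 ∧ 1 ≤ h.2 e.2 ∧ ((h.2 e.2 - 1, h.1 e.1 - 1) : ℕ × ℕ) ∈ μ})
        (v : C₁ ⊕ C₂), Sum.elim h.1.1 h.1.2 v - 1 < M := by
      rintro h (a | b)
      · exact ((key h.1 h.2).1 a).2
      · exact ((key h.1 h.2).2 b).2
    unfold NcolG
    refine le_trans (Nat.card_le_card_of_injective
      (β := (G.ConnectedComponent → ↥μ.cells) × (T → Fin M))
      (fun h => (fun K => ⟨(h.1.2 (pick K).2 - 1, h.1.1 (pick K).1 - 1),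
          (YoungDiagram.mem_cells _).mpr (h.2 (pick K) (hsub (hpickE K))).2.2⟩,
        fun v => ⟨Sum.elim h.1.1 h.1.2 v.1 - 1, hcol h v.1⟩)) ?_) (le_of_eq ?_)
    · intro h h' heq
      simp only [Prod.mk.injEq] at heq
      obtain ⟨heq1, heq2⟩ := heq
      have k1 := key h.1 h.2
      have k2 := key h'.1 h'.2
      apply Subtype.ext
      apply Prod.ext
      · funext a
        by_cases hv : (Sum.inl a : C₁ ⊕ C₂) ∈ Set.range j
        · obtain ⟨x, hx⟩ := hv
          cases x with
          | inl K =>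
            rw [hj] at hx
            simp only [Sum.elim_inl, Sum.inl.injEq] at hx
            have e1 := congrFun heq1 K
            simp only [Subtype.mk.injEq, Prod.mk.injEq] at e1
            have b1 := (k1.1 (pick K).1).1
            have b2 := (k2.1 (pick K).1).1
            have e2 := e1.2
            rw [← hx]
            omega
          | inr K =>
            rw [hj] at hx
            simp only [Sum.elim_inr] at hx
            exact absurd hx (by simp)
        · have e1 := congrFun heq2 ⟨Sum.inl a, hv⟩
          simp only [Fin.mk.injEq, Sum.elim_inl] at e1
          have b1 := (k1.1 a).1
          have b2 := (k2.1 a).1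
          omega
      · funext b
        by_cases hv : (Sum.inr b : C₁ ⊕ C₂) ∈ Set.range j
        · obtain ⟨x, hx⟩ := hv
          cases x with
          | inl K =>
            rw [hj] at hx
            simp only [Sum.elim_inl] at hx
            exact absurd hx (by simp)
          | inr K =>
            rw [hj] at hx
            simp only [Sum.elim_inr, Sum.inr.injEq] at hx
            have e1 := congrFun heq1 K
            simp only [Subtype.mk.injEq, Prod.mk.injEq] at e1
            have b1 := (k1.2 (pick K).2).1
            have b2 := (k2.2 (pick K).2).1
            have e2 := e1.1
            rw [← hx]
            omega
        · have e1 := congrFun heq2 ⟨Sum.inr b, hv⟩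
          simp only [Fin.mk.injEq, Sum.elim_inr] at e1
          have b1 := (k1.2 b).1
          have b2 := (k2.2 b).1
          omega
    · rw [Nat.card_prod, Nat.card_fun, Nat.card_fun, Nat.card_eq_finsetCard]
      simp [YoungDiagram.card]

theorem bipartite_graph_estimate {C₁ C₂ : Type} [Fintype C₁] [Fintype C₂]
    (E : Finset (C₁ × C₂)) (hdeg₁ : ∀ a, 0 < degL E a) (hdeg₂ : ∀ b, 0 < degR E b) :
    (∃ E' ⊆ E, IsStarDecomposition E') ∧
      ∀ E' ⊆ E, IsStarDecomposition E' →
        ∀ (μ : YoungDiagram) (n : ℕ), μ.card = n → ∀ A : ℝ,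
          (rows μ : ℝ) ≤ A → (cols μ : ℝ) ≤ A →
          (NcolG μ E : ℝ) ≤ A ^ (Fintype.card C₁ + Fintype.card C₂) *
            ((n : ℝ) / A ^ 2) ^ Nat.card (bipGraph E').ConnectedComponent := by

  constructor
  · exact exists_star E hdeg₁ hdeg₂
  · intro E' hsubE' hstar μ n hn A hA1 hA2
    by_cases hC1 : Nonempty C₁
    · have hC2 : Nonempty C₂ := by
        by_contra hne2
        haveI : IsEmpty C₂ := not_nonempty_iff.mp hne2
        obtain ⟨a⟩ := hC1
        obtain ⟨e, he, -⟩ := exists_edge_left (hdeg₁ a)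
        exact isEmptyElim e.2
      unfold IsStarDecomposition at hstar
      obtain ⟨hd1, hd2, -⟩ := hstar
      obtain ⟨t, ht, hcount⟩ := core_count E E' hsubE' hd1 hd2 μ
      set c := Nat.card (bipGraph E').ConnectedComponent with hc
      set V := Fintype.card C₁ + Fintype.card C₂ with hV
      set M := max (rows μ) (cols μ) with hMdef
      by_cases hμ : μ.card = 0
      · have hμe : μ.cells = ∅ := Finset.card_eq_zero.mp hμ
        have hN : NcolG μ E = 0 := by
          unfold NcolG
          have hem : IsEmpty {h : (C₁ → ℕ) × (C₂ → ℕ) //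
              ∀ e ∈ E, 1 ≤ h.1 e.1 ∧ 1 ≤ h.2 e.2 ∧ ((h.2 e.2 - 1, h.1 e.1 - 1) : ℕ × ℕ) ∈ μ} := by
            refine ⟨fun h => ?_⟩
            obtain ⟨a⟩ := hC1
            obtain ⟨e, he, -⟩ := exists_edge_left (hdeg₁ a)
            have hb := (h.2 e he).2.2
            rw [← YoungDiagram.mem_cells, hμe] at hb
            exact absurd hb (Finset.notMem_empty _)
          exact @Nat.card_of_isEmpty _ hem
        rw [hN]
        have hA0 : (0:ℝ) ≤ A := le_trans (Nat.cast_nonneg _) hA1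
        push_cast
        exact mul_nonneg (pow_nonneg hA0 _)
          (pow_nonneg (div_nonneg (Nat.cast_nonneg n) (sq_nonneg A)) _)
      · have hne : μ.cells.Nonempty := Finset.card_pos.mp (Nat.pos_of_ne_zero hμ)
        obtain ⟨⟨i0, j0⟩, hbox0⟩ := hne
        have h00 : ((0, 0) : ℕ × ℕ) ∈ μ :=
          μ.up_left_mem (Nat.zero_le _) (Nat.zero_le _) ((YoungDiagram.mem_cells _).mp hbox0)
        have hrows : 1 ≤ rows μ := (mem_bound h00).1
        have hA1' : (1:ℝ) ≤ A := le_trans (by exact_mod_cast hrows) hA1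
        have hA0 : (0:ℝ) < A := lt_of_lt_of_le one_pos hA1'
        have hM : (M:ℝ) ≤ A := by
          rw [hMdef]
          push_cast
          exact max_le hA1 hA2
        rw [hn] at hcount
        calc (NcolG μ E : ℝ) ≤ ((n ^ c * M ^ t : ℕ) : ℝ) := by exact_mod_cast hcount
          _ = (n:ℝ) ^ c * (M:ℝ) ^ t := by push_cast; ring
          _ ≤ (n:ℝ) ^ c * A ^ t :=
              mul_le_mul_of_nonneg_left (pow_le_pow_left₀ (Nat.cast_nonneg _) hM t)
                (by positivity)
          _ ≤ (n:ℝ) ^ c * A ^ (V - 2 * c) :=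
              mul_le_mul_of_nonneg_left (pow_le_pow_right₀ hA1' (by omega)) (by positivity)
          _ = A ^ V * ((n:ℝ) / A ^ 2) ^ c := by
              have hAne : (A:ℝ) ≠ 0 := ne_of_gt hA0
              have hpow : A ^ V = A ^ (V - 2 * c) * (A ^ 2) ^ c := by
                rw [← pow_mul, ← pow_add]
                congr 1
                omega
              rw [div_pow, hpow]
              field_simp
    · haveI : IsEmpty C₁ := not_nonempty_iff.mp hC1
      haveI : IsEmpty C₂ := by
        by_contra hne
        obtain ⟨b⟩ := not_isEmpty_iff.mp hne
        obtain ⟨e, -, -⟩ := exists_edge_right (hdeg₂ b)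
        exact isEmptyElim e.1
      haveI hccE : IsEmpty (bipGraph E').ConnectedComponent :=
        ⟨fun K => SimpleGraph.ConnectedComponent.ind (fun v => isEmptyElim v) K⟩
      have hcc : Nat.card (bipGraph E').ConnectedComponent = 0 := Nat.card_of_isEmpty
      have hN : NcolG μ E = 1 := by
        unfold NcolG
        haveI : Nonempty {h : (C₁ → ℕ) × (C₂ → ℕ) //
            ∀ e ∈ E, 1 ≤ h.1 e.1 ∧ 1 ≤ h.2 e.2 ∧ ((h.2 e.2 - 1, h.1 e.1 - 1) : ℕ × ℕ) ∈ μ} :=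
          ⟨⟨(fun a => isEmptyElim a, fun b => isEmptyElim b), fun e _ => isEmptyElim e.1⟩⟩
        haveI : Subsingleton {h : (C₁ → ℕ) × (C₂ → ℕ) //
            ∀ e ∈ E, 1 ≤ h.1 e.1 ∧ 1 ≤ h.2 e.2 ∧ ((h.2 e.2 - 1, h.1 e.1 - 1) : ℕ × ℕ) ∈ μ} :=
          ⟨fun x y => Subtype.ext (Prod.ext (funext fun a => isEmptyElim a)
            (funext fun b => isEmptyElim b))⟩
        exact Nat.card_unique
      have h1 : Fintype.card C₁ = 0 := Fintype.card_eq_zero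
      have h2 : Fintype.card C₂ = 0 := Fintype.card_eq_zero
      rw [hN, hcc, h1, h2]
      norm_num


end Paper
end
end

section
/- For any integers l ≥ 1 and i ≥ 0, the number of permutations σ ∈ S_l with |σ| = i is at most l^{2i} / i!. -/
open scoped Classical
open MeasureTheory ProbabilityTheory

noncomputable section

namespace Paper

namespace SwapAux
variable {l : ℕ}
def sp (p : Fin l × Fin l) : Equiv.Perm (Fin l) := Equiv.swap p.1 p.2
def lp (L : List (Fin l × Fin l)) : Equiv.Perm (Fin l) := (L.map sp).prod
lemma lp_nil : lp ([] : List (Fin l × Fin l)) = 1 := rfl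
lemma lp_cons (p : Fin l × Fin l) (L : List (Fin l × Fin l)) : lp (p :: L) = sp p * lp L := by
  simp [lp]
lemma key1 {x z m : Fin l} (hxz : x ≠ z) (hxm : x ≠ m) :
    Equiv.swap x m * Equiv.swap z m = Equiv.swap z m * Equiv.swap z x := by
  have h := Equiv.swap_apply_apply (Equiv.swap z m) z x
  rw [Equiv.swap_apply_left, Equiv.swap_apply_of_ne_of_ne hxz hxm] at h
  rw [Equiv.swap_comm x m, h]
  simp [mul_assoc]
lemma key2 {x y z m : Fin l} (hxm : x ≠ m) (hym : y ≠ m) :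
    Equiv.swap x y * Equiv.swap z m = Equiv.swap (Equiv.swap x y z) m * Equiv.swap x y := by
  have h := Equiv.swap_apply_apply (Equiv.swap x y) z m
  rw [Equiv.swap_apply_of_ne_of_ne hxm.symm hym.symm] at h
  rw [h]
  simp [mul_assoc]

lemma extract (m : Fin l) :
    ∀ L : List (Fin l × Fin l), (∀ p ∈ L, p.1 < p.2 ∧ p.2 ≤ m) →
    ∃ L' : List (Fin l × Fin l), (∀ p ∈ L', p.1 < p.2 ∧ p.2 < m) ∧
      ((lp L' = lp L ∧ L'.length ≤ L.length ∧
          ((∃ p ∈ L, p.2 = m) → L'.length + 2 ≤ L.length)) ∨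
       (∃ z : Fin l, z < m ∧ lp L = Equiv.swap z m * lp L' ∧ L'.length + 1 ≤ L.length)) := by
  intro L
  induction L with
  | nil =>
    intro _
    exact ⟨[], by simp, Or.inl ⟨rfl, le_refl _, by simp⟩⟩
  | cons p T ih =>
    intro hL
    obtain ⟨L', hL', hcase⟩ := ih (fun q hq => hL q (List.mem_cons_of_mem _ hq))
    obtain ⟨hp1, hp2⟩ := hL p (List.mem_cons_self)
    rcases hcase with ⟨heq, hlen, hstrict⟩ | ⟨z, hzm, heq, hlen⟩
    · rcases eq_or_lt_of_le hp2 with hpm | hpm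
      · -- p.2 = m : extract this swap
        refine ⟨L', hL', Or.inr ⟨p.1, hpm ▸ hp1, ?_, by simpa using Nat.succ_le_succ hlen⟩⟩
        rw [lp_cons, heq]
        have : sp p = Equiv.swap p.1 m := by rw [sp, hpm]
        rw [this]
      · -- p.2 < m : keep p
        refine ⟨p :: L', ?_, Or.inl ⟨?_, ?_, ?_⟩⟩
        · intro q hq
          rcases List.mem_cons.mp hq with rfl | hq
          · exact ⟨hp1, hpm⟩
          · exact hL' q hq
        · rw [lp_cons, lp_cons, heq]
        · simpa using Nat.succ_le_succ hlen
        · intro ⟨q, hq, hq2⟩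
          rcases List.mem_cons.mp hq with rfl | hq
          · exact absurd hq2 (ne_of_lt hpm)
          · simpa using Nat.succ_le_succ (hstrict ⟨q, hq, hq2⟩)
    · -- T in form swap z m * lp L'
      rcases eq_or_lt_of_le hp2 with hpm | hpm
      · -- p.2 = m
        have hp1m : p.1 ≠ m := ne_of_lt (hpm ▸ hp1)
        have hsp : sp p = Equiv.swap p.1 m := by rw [sp, hpm]
        rcases eq_or_ne p.1 z with hxz | hxz
        · -- cancellation
          refine ⟨L', hL', Or.inl ⟨?_, by simp only [List.length_cons]; omega, fun _ => by simpa using Nat.succ_le_succ hlen⟩⟩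
          rw [lp_cons, heq, hsp, hxz, ← mul_assoc, Equiv.swap_mul_self, one_mul]
        · -- key1
          have hkey : lp (p :: T) = Equiv.swap z m * (Equiv.swap z p.1 * lp L') := by
            rw [lp_cons, heq, hsp, ← mul_assoc, key1 hxz hp1m, mul_assoc]
          rcases hxz.lt_or_gt with hlt | hlt
          · refine ⟨(p.1, z) :: L', ?_, Or.inr ⟨z, hzm, ?_, ?_⟩⟩
            · intro q hq
              rcases List.mem_cons.mp hq with rfl | hq
              · exact ⟨hlt, hzm⟩
              · exact hL' q hq
            · rw [hkey, lp_cons]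
              have : sp (p.1, z) = Equiv.swap z p.1 := Equiv.swap_comm _ _
              rw [this]
            · simpa using Nat.succ_le_succ hlen
          · refine ⟨(z, p.1) :: L', ?_, Or.inr ⟨z, hzm, ?_, ?_⟩⟩
            · intro q hq
              rcases List.mem_cons.mp hq with rfl | hq
              · exact ⟨hlt, hpm ▸ hp1⟩
              · exact hL' q hq
            · rw [hkey, lp_cons]; rfl
            · simpa using Nat.succ_le_succ hlen
      · -- p.2 < m : commute p past the m-swap
        have hp1m : p.1 ≠ m := ne_of_lt (lt_trans hp1 hpm)
        have hp2m : p.2 ≠ m := ne_of_lt hpm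
        have hz' : Equiv.swap p.1 p.2 z < m := by
          rcases eq_or_ne z p.1 with h | h
          · rw [h, Equiv.swap_apply_left]; exact hpm
          · rcases eq_or_ne z p.2 with h2 | h2
            · rw [h2, Equiv.swap_apply_right]; exact lt_trans hp1 hpm
            · rw [Equiv.swap_apply_of_ne_of_ne h h2]; exact hzm
        refine ⟨p :: L', ?_, Or.inr ⟨Equiv.swap p.1 p.2 z, hz', ?_, ?_⟩⟩
        · intro q hq
          rcases List.mem_cons.mp hq with rfl | hq
          · exact ⟨hp1, hpm⟩
          · exact hL' q hq
        · rw [lp_cons, heq, ← mul_assoc, sp, key2 hp1m hp2m, mul_assoc, lp_cons, sp]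
        · simpa using Nat.succ_le_succ hlen

lemma toCanonical : ∀ (n : ℕ) (L : List (Fin l × Fin l)), L.length ≤ n →
    (∀ p ∈ L, p.1 < p.2) →
    ∃ M : List (Fin l × Fin l), M.length ≤ L.length ∧ (∀ p ∈ M, p.1 < p.2) ∧
      lp M = lp L ∧ (M.map Prod.snd).Chain' (· > ·) ∧
      ∀ p ∈ M, ∃ q ∈ L, p.2 ≤ q.2 := by
  intro n
  induction n with
  | zero =>
    intro L hlen _
    have : L = [] := List.eq_nil_of_length_eq_zero (Nat.le_zero.mp hlen)
    subst this
    exact ⟨[], by simp, by simp, rfl, List.isChain_nil, by simp⟩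
  | succ n ih =>
    intro L hlen hL
    rcases eq_or_ne L List.nil with rfl | hnil
    · exact ⟨[], by simp, by simp, rfl, List.isChain_nil, by simp⟩
    · obtain ⟨p₀, T₀, hcons⟩ := List.exists_cons_of_ne_nil hnil
      have hne : ((L.map Prod.snd).toFinset).Nonempty :=
        ⟨p₀.2, by simp [hcons]⟩
      set m := ((L.map Prod.snd).toFinset).max' hne with hm
      have hmem : ∃ q ∈ L, q.2 = m := by
        have h := Finset.max'_mem _ hne
        rw [List.mem_toFinset, List.mem_map] at h
        obtain ⟨q, hq, hq2⟩ := h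
        exact ⟨q, hq, hq2⟩
      have hle : ∀ p ∈ L, p.2 ≤ m := fun p hp =>
        Finset.le_max' _ _ (by rw [List.mem_toFinset, List.mem_map]; exact ⟨p, hp, rfl⟩)
      obtain ⟨L', hL', hcase⟩ := extract m L (fun p hp => ⟨hL p hp, hle p hp⟩)
      obtain ⟨qm, hqm, hqm2⟩ := hmem
      rcases hcase with ⟨heq, hlen', hstrict⟩ | ⟨z, hzm, heq, hlen'⟩
      · have h2 := hstrict ⟨qm, hqm, hqm2⟩
        obtain ⟨M, hMlen, hMp, hMeq, hMchain, hMb⟩ :=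
          ih L' (by omega) (fun p hp => (hL' p hp).1)
        refine ⟨M, by omega, hMp, by rw [hMeq, heq], hMchain, fun p hp => ?_⟩
        obtain ⟨q, hq, hq2⟩ := hMb p hp
        exact ⟨qm, hqm, by rw [hqm2]; exact le_of_lt (lt_of_le_of_lt hq2 (hL' q hq).2)⟩
      · obtain ⟨M, hMlen, hMp, hMeq, hMchain, hMb⟩ :=
          ih L' (by omega) (fun p hp => (hL' p hp).1)
        have hltm : ∀ p ∈ M, p.2 < m := fun p hp => by
          obtain ⟨q, hq, hq2⟩ := hMb p hp
          exact lt_of_le_of_lt hq2 (hL' q hq).2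
        refine ⟨(z, m) :: M, by simp only [List.length_cons]; omega, ?_, ?_, ?_, ?_⟩
        · intro q hq
          rcases List.mem_cons.mp hq with rfl | hq
          · exact hzm
          · exact hMp q hq
        · rw [lp_cons, hMeq, heq]; rfl
        · rw [List.map_cons]
          show List.IsChain _ _
          rw [List.isChain_cons]
          refine ⟨fun b hb => ?_, hMchain⟩
          have hbmem := List.mem_of_mem_head? hb
          rw [List.mem_map] at hbmem
          obtain ⟨q, hq, rfl⟩ := hbmem
          exact hltm q hq
        · intro q hq
          rcases List.mem_cons.mp hq with rfl | hq
          · exact ⟨qm, hqm, le_of_eq hqm2.symm⟩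
          · exact ⟨qm, hqm, by rw [hqm2]; exact (hltm q hq).le⟩

lemma exists_pairs_of_swaps : ∀ L : List (Equiv.Perm (Fin l)), (∀ τ ∈ L, τ.IsSwap) →
    ∃ P : List (Fin l × Fin l), P.length = L.length ∧ (∀ p ∈ P, p.1 < p.2) ∧
      lp P = L.prod := by
  intro L
  induction L with
  | nil => exact fun _ => ⟨[], rfl, by simp, by simp [lp]⟩
  | cons τ T ih =>
    intro h
    obtain ⟨P, h1, h2, h3⟩ := ih (fun τ' h' => h τ' (List.mem_cons_of_mem _ h'))
    obtain ⟨x, y, hxy, hτ⟩ := h τ (List.mem_cons_self)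
    rcases hxy.lt_or_gt with hlt | hlt
    · refine ⟨(x, y) :: P, by simp [h1], ?_, ?_⟩
      · intro q hq
        rcases List.mem_cons.mp hq with rfl | hq
        · exact hlt
        · exact h2 q hq
      · rw [lp_cons, h3, List.prod_cons, hτ]; rfl
    · refine ⟨(y, x) :: P, by simp [h1], ?_, ?_⟩
      · intro q hq
        rcases List.mem_cons.mp hq with rfl | hq
        · exact hlt
        · exact h2 q hq
      · rw [lp_cons, h3, List.prod_cons, hτ]
        have : sp (y, x) = Equiv.swap x y := Equiv.swap_comm _ _
        rw [this]

lemma exists_canonical (σ : Equiv.Perm (Fin l)) :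
    ∃ M : List (Fin l × Fin l), M.length = permLength σ ∧ (∀ p ∈ M, p.1 < p.2) ∧
      lp M = σ ∧ (M.map Prod.snd).Chain' (· > ·) := by
  obtain ⟨L0, hprod0, hswap0⟩ := (Equiv.Perm.truncSwapFactors σ).out
  have hne : {k | ∃ L : List (Equiv.Perm (Fin l)), L.length = k ∧ (∀ τ ∈ L, τ.IsSwap) ∧
      L.prod = σ}.Nonempty := ⟨L0.length, L0, rfl, hswap0, hprod0⟩
  obtain ⟨L1, hlen1, hswap1, hprod1⟩ := Nat.sInf_mem hne
  obtain ⟨P, hPlen, hPp, hPeq⟩ := exists_pairs_of_swaps L1 hswap1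
  obtain ⟨M, hMlen, hMp, hMeq, hMchain, -⟩ := toCanonical P.length P le_rfl hPp
  have hupper : permLength σ ≤ M.length := by
    apply Nat.sInf_le
    refine ⟨M.map sp, by rw [List.length_map], ?_, ?_⟩
    · intro τ hτ
      rw [List.mem_map] at hτ
      obtain ⟨q, hq, rfl⟩ := hτ
      exact ⟨q.1, q.2, ne_of_lt (hMp q hq), rfl⟩
    · show lp M = σ
      rw [hMeq, hPeq, hprod1]
  have hlower : M.length ≤ permLength σ := by
    calc M.length ≤ P.length := hMlen
      _ = L1.length := hPlen
      _ = permLength σ := hlen1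
  exact ⟨M, le_antisymm hlower hupper, hMp, by rw [hMeq, hPeq, hprod1], hMchain⟩

end SwapAux

theorem count_permutations_of_given_length (l i : ℕ) (hl : 1 ≤ l) :
    ((Finset.univ.filter fun σ : Equiv.Perm (Fin l) => permLength σ = i).card : ℝ) ≤
      (l : ℝ) ^ (2 * i) / (Nat.factorial i : ℝ) := by
  have hd : (0 : ℕ) < l := hl
  set d : Fin l × Fin l := (⟨0, hd⟩, ⟨0, hd⟩) with hdd
  choose F hF1 hF2 hF3 hF4 using fun σ : Equiv.Perm (Fin l) => SwapAux.exists_canonical σ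
  set s := Finset.univ.filter fun σ : Equiv.Perm (Fin l) => permLength σ = i with hs
  set t := (Finset.powersetCard i (Finset.univ : Finset (Fin l))) ×ˢ
    (Finset.univ : Finset (Fin i → Fin l)) with ht
  have hnodup : ∀ σ : Equiv.Perm (Fin l), ((F σ).map Prod.snd).Nodup := fun σ =>
    (List.isChain_iff_pairwise.mp (hF4 σ)).imp fun h => ne_of_gt h
  have hmemlen : ∀ σ ∈ s, (F σ).length = i := fun σ hσ => by
    rw [hF1 σ]
    exact (Finset.mem_filter.mp hσ).2
  have hcard : s.card ≤ t.card := by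
    apply Finset.card_le_card_of_injOn
      (fun σ => (((F σ).map Prod.snd).toFinset, fun k : Fin i => ((F σ).getD k d).1))
    · intro σ hσ
      rw [ht, Finset.mem_coe, Finset.mem_product]
      refine ⟨?_, Finset.mem_univ _⟩
      rw [Finset.mem_powersetCard_univ, List.toFinset_card_of_nodup (hnodup σ),
        List.length_map, hmemlen σ hσ]
    · intro σ₁ h₁ σ₂ h₂ heq
      simp only [Prod.mk.injEq] at heq
      obtain ⟨heq1, heq2⟩ := heq
      have hperm := List.perm_of_nodup_nodup_toFinset_eq (hnodup σ₁) (hnodup σ₂) heq1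
      haveI : Std.Antisymm (α := Fin l) (· > ·) := ⟨fun a b h1 h2 => absurd h1 (lt_asymm h2)⟩
      have hsnd : (F σ₁).map Prod.snd = (F σ₂).map Prod.snd :=
        List.Perm.eq_of_pairwise' (List.isChain_iff_pairwise.mp (hF4 σ₁))
          (List.isChain_iff_pairwise.mp (hF4 σ₂)) hperm
      have hlen1 : (F σ₁).length = i := hmemlen σ₁ h₁
      have hlen2 : (F σ₂).length = i := hmemlen σ₂ h₂
      have hFeq : F σ₁ = F σ₂ := by
        apply List.ext_getElem (by rw [hlen1, hlen2])
        intro k hk1 hk2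
        have hki : k < i := by rwa [hlen1] at hk1
        refine Prod.ext ?_ ?_
        · have h := congrFun heq2 ⟨k, hki⟩
          simp only at h
          rwa [List.getD_eq_getElem _ _ hk1, List.getD_eq_getElem _ _ hk2] at h
        · have h := congrArg (fun Lst : List (Fin l) => Lst.getD k ⟨0, hd⟩) hsnd
          rw [List.getD_eq_getElem _ _ (by rw [List.length_map]; exact hk1),
            List.getD_eq_getElem _ _ (by rw [List.length_map]; exact hk2)] at h
          simpa using h
      rw [← hF3 σ₁, ← hF3 σ₂, hFeq]
  have htcard : t.card = l.choose i * l ^ i := by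
    rw [ht, Finset.card_product, Finset.card_powersetCard, Finset.card_univ,
      Finset.card_univ, Fintype.card_fin]
    congr 1
    simp [Fintype.card_fun]
  have hnat : s.card * i.factorial ≤ l ^ (2 * i) := by
    calc s.card * i.factorial ≤ (l.choose i * l ^ i) * i.factorial :=
          Nat.mul_le_mul_right _ (hcard.trans htcard.le)
      _ = (i.factorial * l.choose i) * l ^ i := by ring
      _ ≤ l ^ i * l ^ i := by
          apply Nat.mul_le_mul_right
          rw [← Nat.descFactorial_eq_factorial_mul_choose]
          exact Nat.descFactorial_le_pow l i
      _ = l ^ (2 * i) := by rw [← pow_add, two_mul]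
  rw [le_div_iff₀ (by positivity)]
  calc (s.card : ℝ) * (i.factorial : ℝ) = ((s.card * i.factorial : ℕ) : ℝ) := by push_cast; ring
    _ ≤ ((l ^ (2 * i) : ℕ) : ℝ) := Nat.cast_le.mpr hnat
    _ = (l : ℝ) ^ (2 * i) := by push_cast; ring


end Paper
end
end
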